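/- For all real α, β, ρ, all natural numbers n, k, and every natural number m ≥ 1: S^{1,1,q}_{n+m,k}(α,β,ρ) = Σ_{r=0}^{n} Σ_{j=0}^{m} S^{1,1,q}_{m,j}(α,β,ρ) · q^{r(βj − αm − ρ)} · binom(n,r)_{q^{−α}} · S^{1,1,q}_{r,k−j}(α,β,0) · Π_{i=0}^{n−r−1} [βj − ρ − α(m+i)]_q, where S^{1,1,q}_{r,k−j}(α,β,0) is interpreted as 0 when j > k. (Spivey-type convolution for Type II generalized q-Stirling numbers.) -/
import Mathlib


/-- The `q`-bracket `[t]_q = (q^t - 1)/(q - 1)` (real exponentiation). -/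
noncomputable def qBracket (q t : ℝ) : ℝ := (q ^ t - 1) / (q - 1)

open Classical in
/-- The `Q`-binomial coefficient: the sum of `Q^(t₁+⋯+t_{n-k})` over all weakly
increasing integer tuples `0 ≤ t₁ ≤ ⋯ ≤ t_{n-k} ≤ k` when `k ≤ n`, and `0` when `k > n`. -/
noncomputable def qBinom (Q : ℝ) (n k : ℕ) : ℝ :=
  if k ≤ n then
    ∑ f ∈ Finset.univ.filter (fun f : Fin (n - k) → Fin (k + 1) => Monotone f),
      Q ^ (∑ i, (f i : ℕ))
  else 0

/-- The generalized `q`-Stirling numbers `S^{c,d}_{s,q}[n,k]`. -/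
noncomputable def genStirlingCD (c d s q : ℝ) : ℕ → ℕ → ℝ
  | 0, 0 => 1
  | 0, _ + 1 => 0
  | _ + 1, 0 => 0
  | n + 1, k + 1 =>
    if k + 1 ≤ n + 1 then
      q ^ (c * (n : ℝ) + d + ((n : ℝ) - (k : ℝ)) * (s - 1)) * genStirlingCD c d s q n k
        + qBracket q (c * (n : ℝ) + d + ((n : ℝ) - (k : ℝ) - 1) * (s - 1)) *
            genStirlingCD c d s q n (k + 1)
    else 0

/-- The Type II generalized `q`-Stirling numbers of Remmel and Wachs,
via the identification `S^{1,1,q}_{n,k}(α,β,ρ) = S^{β-α,-ρ}_{1-β,q}[n,k]`. -/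
noncomputable def typeIIStirling (q α β ρ : ℝ) (n k : ℕ) : ℝ :=
  genStirlingCD (β - α) (-ρ) (1 - β) q n k

lemma qBracket_zero (q : ℝ) : qBracket q 0 = 0 := by simp [qBracket]

lemma qBracket_add (q : ℝ) (hq : 0 < q) (x y : ℝ) :
    qBracket q (x + y) = qBracket q x + q ^ x * qBracket q y := by
  rcases eq_or_ne q 1 with rfl | hq1
  · simp [qBracket]
  · have h1 : q - 1 ≠ 0 := sub_ne_zero.mpr hq1
    rw [qBracket, qBracket, qBracket, Real.rpow_add hq]
    field_simp
    ring

lemma qBinom_of_lt (Q : ℝ) {n k : ℕ} (h : n < k) : qBinom Q n k = 0 := by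
  rw [qBinom, if_neg (by omega)]

lemma qBinom_self (Q : ℝ) (n : ℕ) : qBinom Q n n = 1 := by
  rw [qBinom, if_pos le_rfl]
  haveI hE : IsEmpty (Fin (n - n)) := ⟨fun a => absurd a.2 (by omega)⟩
  have h : (Finset.univ.filter (fun f : Fin (n - n) → Fin (n + 1) => Monotone f))
      = Finset.univ := by
    apply Finset.filter_true_of_mem
    intro f _ a b _
    exact (hE.false a).elim
  rw [h]
  simp [Finset.univ_unique]

lemma qBinom_zero_right (Q : ℝ) (n : ℕ) : qBinom Q n 0 = 1 := by
  rw [qBinom, if_pos (Nat.zero_le n)]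
  simp only [Nat.sub_zero]
  have : (Finset.univ.filter (fun f : Fin n → Fin 1 => Monotone f)) = Finset.univ := by
    apply Finset.filter_true_of_mem
    intro f _ a b _
    exact le_of_eq (Subsingleton.elim _ _)
  rw [this]
  simp [Finset.univ_unique]

open Finset in
lemma qBinom_key (Q : ℝ) (M K : ℕ) :
    (∑ f ∈ Finset.univ.filter (fun f : Fin (M+1) → Fin (K+1+1) => Monotone f), Q ^ (∑ i, (f i : ℕ)))
    = (∑ g ∈ Finset.univ.filter (fun g : Fin M → Fin (K+1+1) => Monotone g), Q ^ (∑ i, (g i : ℕ)))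
    + Q^(M+1) * ∑ h ∈ Finset.univ.filter (fun h : Fin (M+1) → Fin (K+1) => Monotone h), Q ^ (∑ i, (h i : ℕ)) := by
  classical
  rw [← Finset.sum_filter_add_sum_filter_not
      (Finset.univ.filter (fun f : Fin (M+1) → Fin (K+1+1) => Monotone f)) (fun f => f 0 = 0)]
  congr 1
  · -- f 0 = 0 part
    apply Finset.sum_nbij' (i := fun f => Fin.tail f) (j := fun g => Fin.cons 0 g)
    · intro f hf
      simp only [Finset.mem_filter, Finset.mem_univ, true_and] at hf ⊢
      intro a b hab
      exact hf.1 (Fin.succ_le_succ_iff.mpr hab)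
    · intro g hg
      simp only [Finset.mem_filter, Finset.mem_univ, true_and] at hg ⊢
      constructor
      · intro a b hab
        induction a using Fin.cases with
        | zero => rw [Fin.cons_zero]; exact Fin.zero_le _
        | succ i =>
          induction b using Fin.cases with
          | zero => exact absurd (Fin.le_zero_iff.mp hab) (Fin.succ_ne_zero i)
          | succ j =>
            rw [Fin.cons_succ, Fin.cons_succ]
            exact hg (Fin.succ_le_succ_iff.mp hab)
      · simp
    · intro f hf
      simp only [Finset.mem_filter, Finset.mem_univ, true_and] at hf
      rw [← hf.2]
      exact Fin.cons_self_tail f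
    · intro g _
      simp
    · intro f hf
      simp only [Finset.mem_filter, Finset.mem_univ, true_and] at hf
      congr 1
      rw [Fin.sum_univ_succ, hf.2]
      simp [Fin.tail]
  · -- f 0 ≠ 0 part
    rw [Finset.mul_sum]
    apply Finset.sum_nbij'
      (i := fun f i => (⟨(f i : ℕ) - 1, by have := (f i).isLt; omega⟩ : Fin (K+1)))
      (j := fun h i => (h i).succ)
    · intro f hf
      simp only [Finset.mem_filter, Finset.mem_univ, true_and] at hf ⊢
      intro a b hab
      have := hf.1 hab
      rw [Fin.le_def] at this ⊢
      simp only
      omega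
    · intro h hh
      simp only [Finset.mem_filter, Finset.mem_univ, true_and] at hh ⊢
      refine ⟨fun a b hab => Fin.succ_le_succ_iff.mpr (hh hab), Fin.succ_ne_zero _⟩
    · intro f hf
      simp only [Finset.mem_filter, Finset.mem_univ, true_and] at hf
      have h1 : ∀ i, 1 ≤ (f i : ℕ) := by
        intro i
        have h0 : (f 0 : ℕ) ≠ 0 := by
          intro hh
          exact hf.2 (Fin.ext (by simpa using hh))
        have := hf.1 (Fin.zero_le i)
        rw [Fin.le_def] at this
        omega
      funext i
      apply Fin.ext
      simp only [Fin.val_succ]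
      have := h1 i
      omega
    · intro h _
      funext i
      apply Fin.ext
      simp
    · intro f hf
      simp only [Finset.mem_filter, Finset.mem_univ, true_and] at hf
      have h1 : ∀ i, 1 ≤ (f i : ℕ) := by
        intro i
        have h0 : (f 0 : ℕ) ≠ 0 := by
          intro hh
          exact hf.2 (Fin.ext (by simpa using hh))
        have := hf.1 (Fin.zero_le i)
        rw [Fin.le_def] at this
        omega
      rw [← pow_add]
      congr 1
      have : ∀ i : Fin (M+1), (f i : ℕ) = 1 + ((f i : ℕ) - 1) := fun i => by have := h1 i; omega
      calc ∑ i, (f i : ℕ) = ∑ i : Fin (M+1), (1 + ((f i : ℕ) - 1)) := Finset.sum_congr rfl (fun i _ => this i)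
        _ = (M+1) + ∑ i : Fin (M+1), ((f i : ℕ) - 1) := by
            rw [Finset.sum_add_distrib]; simp
        _ = (M+1) + ∑ i : Fin (M+1), (((⟨(f i : ℕ) - 1, by have := (f i).isLt; omega⟩ : Fin (K+1))) : ℕ) := rfl

open Classical in
lemma qBinom_eq_sum (Q : ℝ) (n k L : ℕ) (h : k ≤ n) (hL : L = n - k) :
    qBinom Q n k
    = ∑ f ∈ Finset.univ.filter (fun f : Fin L → Fin (k+1) => Monotone f), Q ^ (∑ i, (f i : ℕ)) := by
  subst hL; rw [qBinom, if_pos h]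

lemma qBinom_pascal (Q : ℝ) {n k : ℕ} (h : k ≤ n) :
    qBinom Q (n+1) (k+1) = qBinom Q n (k+1) + Q ^ (n - k) * qBinom Q n k := by
  rcases eq_or_lt_of_le h with rfl | h'
  · rw [qBinom_self, qBinom_of_lt Q (Nat.lt_succ_self k), Nat.sub_self, pow_zero, qBinom_self]
    ring
  · have hk1 : k + 1 ≤ n := h'
    have hM : n - k = (n - (k+1)) + 1 := by omega
    rw [qBinom_eq_sum Q (n+1) (k+1) ((n - (k+1)) + 1) (by omega) (by omega),
        qBinom_eq_sum Q n (k+1) (n - (k+1)) hk1 rfl,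
        qBinom_eq_sum Q n k ((n - (k+1)) + 1) h (by omega), hM]
    exact qBinom_key Q (n - (k+1)) k

lemma genStirling_of_lt (c d s q : ℝ) {n k : ℕ} (h : n < k) : genStirlingCD c d s q n k = 0 := by
  match n, k, h with
  | 0, k + 1, _ => rfl
  | n + 1, k + 1, h =>
    rw [genStirlingCD, if_neg (by omega)]

lemma genStirling_zero (c d s q : ℝ) (n : ℕ) : genStirlingCD c d s q (n+1) 0 = 0 := rfl

lemma genStirling_zero_right (c d s q : ℝ) (k : ℕ) :
    genStirlingCD c d s q 0 k = if k = 0 then 1 else 0 := by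
  match k with
  | 0 => rfl
  | k + 1 => rfl

lemma typeII_of_lt (q α β ρ : ℝ) {n k : ℕ} (h : n < k) : typeIIStirling q α β ρ n k = 0 :=
  genStirling_of_lt _ _ _ _ h

lemma typeII_succ_succ (q α β ρ : ℝ) (n k : ℕ) :
    typeIIStirling q α β ρ (n+1) (k+1)
      = q ^ (β * (k:ℝ) - α * (n:ℝ) - ρ) * typeIIStirling q α β ρ n k
        + qBracket q (β * ((k:ℝ)+1) - α * (n:ℝ) - ρ) * typeIIStirling q α β ρ n (k+1) := by
  rcases le_or_gt k n with h | h
  · rw [typeIIStirling, genStirlingCD, if_pos (by omega)]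
    have e1 : (β - α) * (n : ℝ) + -ρ + ((n : ℝ) - (k : ℝ)) * ((1 - β) - 1)
        = β * (k:ℝ) - α * (n:ℝ) - ρ := by ring
    have e2 : (β - α) * (n : ℝ) + -ρ + ((n : ℝ) - (k : ℝ) - 1) * ((1 - β) - 1)
        = β * ((k:ℝ)+1) - α * (n:ℝ) - ρ := by ring
    rw [e1, e2]
    rfl
  · rw [typeII_of_lt q α β ρ (by omega), typeII_of_lt q α β ρ (by omega),
        typeII_of_lt q α β ρ (by omega)]
    ring

noncomputable def Gterm (q α β ρ : ℝ) (m n k r : ℕ) : ℝ :=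
  ∑ j ∈ Finset.range (m + 1),
    typeIIStirling q α β ρ m j *
      q ^ ((r : ℝ) * (β * (j : ℝ) - α * (m : ℝ) - ρ)) *
      qBinom (q ^ (-α)) n r *
      (if j ≤ k then typeIIStirling q α β 0 r (k - j) else 0) *
      ∏ i ∈ Finset.range (n - r),
        qBracket q (β * (j : ℝ) - ρ - α * ((m : ℝ) + (i : ℝ)))

noncomputable def Gpterm (q α β ρ : ℝ) (m n k r : ℕ) : ℝ :=
  ∑ j ∈ Finset.range (m + 1),
    typeIIStirling q α β ρ m j *
      q ^ ((r : ℝ) * (β * (j : ℝ) - α * (m : ℝ) - ρ)) *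
      qBinom (q ^ (-α)) n r *
      (if j ≤ k then typeIIStirling q α β 0 r (k - j) else 0) *
      ∏ i ∈ Finset.range (n + 1 - r),
        qBracket q (β * (j : ℝ) - ρ - α * ((m : ℝ) + (i : ℝ)))

noncomputable def Hterm (q α β ρ : ℝ) (m n k r : ℕ) : ℝ :=
  ∑ j ∈ Finset.range (m + 1),
    typeIIStirling q α β ρ m j *
      q ^ (((r : ℝ) + 1) * (β * (j : ℝ) - α * (m : ℝ) - ρ)) *
      (q ^ (-α)) ^ (n - r) *
      qBinom (q ^ (-α)) n r *
      (if j ≤ k + 1 then typeIIStirling q α β 0 (r + 1) (k + 1 - j) else 0) *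
      ∏ i ∈ Finset.range (n - r),
        qBracket q (β * (j : ℝ) - ρ - α * ((m : ℝ) + (i : ℝ)))

lemma Astep (q α β : ℝ) (hq : 0 < q) (r k j : ℕ) :
    (if j ≤ k + 1 then typeIIStirling q α β 0 (r + 1) (k + 1 - j) else 0)
    = q ^ (β * (k : ℝ) - β * (j : ℝ) - α * (r : ℝ)) *
        (if j ≤ k then typeIIStirling q α β 0 r (k - j) else 0)
      + qBracket q (β * ((k : ℝ) + 1) - β * (j : ℝ) - α * (r : ℝ)) *
          (if j ≤ k + 1 then typeIIStirling q α β 0 r (k + 1 - j) else 0) := by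
  rcases le_or_gt j k with hjk | hjk
  · rw [if_pos (by omega), if_pos hjk, if_pos (by omega)]
    have h1 : k + 1 - j = (k - j) + 1 := by omega
    rw [h1, typeII_succ_succ]
    have c1 : β * ((k - j : ℕ) : ℝ) - α * (r : ℝ) - 0
        = β * (k : ℝ) - β * (j : ℝ) - α * (r : ℝ) := by
      rw [Nat.cast_sub hjk]; ring
    have c2 : β * (((k - j : ℕ) : ℝ) + 1) - α * (r : ℝ) - 0
        = β * ((k : ℝ) + 1) - β * (j : ℝ) - α * (r : ℝ) := by
      rw [Nat.cast_sub hjk]; ring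
    rw [c1, c2]
  · rcases le_or_gt j (k + 1) with hj1 | hj1
    · have hj : j = k + 1 := by omega
      subst hj
      rw [if_pos le_rfl, if_neg (by omega), if_pos le_rfl]
      simp only [Nat.sub_self]
      have hz : typeIIStirling q α β 0 (r + 1) 0 = 0 := genStirling_zero _ _ _ _ r
      rw [hz]
      match r with
      | 0 =>
        have hb : β * ((k : ℝ) + 1) - β * (((k + 1 : ℕ)) : ℝ) - α * ((0 : ℕ) : ℝ) = 0 := by
          push_cast; ring
        rw [hb, qBracket_zero]
        ring
      | r + 1 =>
        have hz2 : typeIIStirling q α β 0 (r + 1) 0 = 0 := genStirling_zero _ _ _ _ r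
        rw [hz2]
        ring
    · rw [if_neg (by omega), if_neg (by omega), if_neg (by omega)]
      ring

lemma core_alg (S Cb A0 A1 P Bx By p1 p2 pN p0 pE px : ℝ)
    (h1 : p2 * pN * p0 = pE * p1) (h2 : p2 * pN = p1 * px) :
    S * p1 * Cb * A1 * (P * Bx) + S * p2 * pN * Cb * (p0 * A0 + By * A1) * P
    = pE * (S * p1 * Cb * A0 * P) + (Bx + px * By) * (S * p1 * Cb * A1 * P) := by
  linear_combination (S * Cb * A0 * P) * h1 + (S * Cb * A1 * P * By) * h2

lemma L1 (q : ℝ) (hq : 0 < q) (α β ρ : ℝ) (m n k r : ℕ) (hr : r ≤ n) :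
    Gterm q α β ρ m (n + 1) (k + 1) (r + 1)
    = Gpterm q α β ρ m n (k + 1) (r + 1) + Hterm q α β ρ m n k r := by
  simp only [Gterm, Gpterm, Hterm]
  rw [← Finset.sum_add_distrib]
  refine Finset.sum_congr rfl fun j hj => ?_
  rw [qBinom_pascal _ hr]
  have e1 : n + 1 - (r + 1) = n - r := by omega
  rw [e1]
  push_cast
  ring

lemma L2 (q : ℝ) (α β ρ : ℝ) (m n k : ℕ) :
    Gterm q α β ρ m (n + 1) (k + 1) 0 = Gpterm q α β ρ m n (k + 1) 0 := by
  simp only [Gterm, Gpterm]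
  refine Finset.sum_congr rfl fun j hj => ?_
  rw [qBinom_zero_right, qBinom_zero_right]

lemma L3 (q : ℝ) (α β ρ : ℝ) (m n k : ℕ) :
    Gpterm q α β ρ m n (k + 1) (n + 1) = 0 := by
  refine Finset.sum_eq_zero fun j hj => ?_
  rw [qBinom_of_lt _ (Nat.lt_succ_self n)]
  ring

lemma L4 (q : ℝ) (hq : 0 < q) (α β ρ : ℝ) (m n k r : ℕ) (hr : r ≤ n) :
    Gpterm q α β ρ m n (k + 1) r + Hterm q α β ρ m n k r
    = q ^ (β * (k : ℝ) - α * ((n : ℝ) + (m : ℝ)) - ρ) * Gterm q α β ρ m n k r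
      + qBracket q (β * ((k : ℝ) + 1) - α * ((n : ℝ) + (m : ℝ)) - ρ) *
          Gterm q α β ρ m n (k + 1) r := by
  simp only [Gterm, Gpterm, Hterm]
  rw [Finset.mul_sum, Finset.mul_sum, ← Finset.sum_add_distrib, ← Finset.sum_add_distrib]
  refine Finset.sum_congr rfl fun j hj => ?_
  have hsub : n + 1 - r = (n - r) + 1 := by omega
  have hQ : (q ^ (-α)) ^ (n - r) = q ^ (-α * ((n - r : ℕ) : ℝ)) := by
    rw [← Real.rpow_natCast (q ^ (-α)) (n - r), ← Real.rpow_mul hq.le]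
  have hE2 : β * ((k : ℝ) + 1) - α * ((n : ℝ) + (m : ℝ)) - ρ
      = (β * (j : ℝ) - ρ - α * ((m : ℝ) + ((n - r : ℕ) : ℝ)))
        + (β * ((k : ℝ) + 1) - β * (j : ℝ) - α * (r : ℝ)) := by
    rw [Nat.cast_sub hr]; ring
  rw [hsub, Finset.prod_range_succ, Astep q α β hq r k j, hQ, hE2, qBracket_add q hq]
  have h1 : q ^ (((r : ℝ) + 1) * (β * (j : ℝ) - α * (m : ℝ) - ρ))
        * q ^ (-α * ((n - r : ℕ) : ℝ))
        * q ^ (β * (k : ℝ) - β * (j : ℝ) - α * (r : ℝ))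
      = q ^ (β * (k : ℝ) - α * ((n : ℝ) + (m : ℝ)) - ρ)
        * q ^ ((r : ℝ) * (β * (j : ℝ) - α * (m : ℝ) - ρ)) := by
    rw [← Real.rpow_add hq, ← Real.rpow_add hq, ← Real.rpow_add hq]
    congr 1
    rw [Nat.cast_sub hr]; ring
  have h2 : q ^ (((r : ℝ) + 1) * (β * (j : ℝ) - α * (m : ℝ) - ρ))
        * q ^ (-α * ((n - r : ℕ) : ℝ))
      = q ^ ((r : ℝ) * (β * (j : ℝ) - α * (m : ℝ) - ρ))
        * q ^ (β * (j : ℝ) - ρ - α * ((m : ℝ) + ((n - r : ℕ) : ℝ))) := by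
    rw [← Real.rpow_add hq, ← Real.rpow_add hq]
    congr 1
    ring
  exact core_alg _ _ _ _ _ _ _ _ _ _ _ _ _ h1 h2

lemma step_lemma (q : ℝ) (hq : 0 < q) (α β ρ : ℝ) (m n k : ℕ) :
    (∑ r ∈ Finset.range (n + 1 + 1), Gterm q α β ρ m (n + 1) (k + 1) r)
    = q ^ (β * (k : ℝ) - α * ((n : ℝ) + (m : ℝ)) - ρ) *
        (∑ r ∈ Finset.range (n + 1), Gterm q α β ρ m n k r)
      + qBracket q (β * ((k : ℝ) + 1) - α * ((n : ℝ) + (m : ℝ)) - ρ) *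
          (∑ r ∈ Finset.range (n + 1), Gterm q α β ρ m n (k + 1) r) := by
  rw [Finset.sum_range_succ']
  calc (∑ r ∈ Finset.range (n + 1), Gterm q α β ρ m (n + 1) (k + 1) (r + 1))
        + Gterm q α β ρ m (n + 1) (k + 1) 0
      = (∑ r ∈ Finset.range (n + 1),
            (Gpterm q α β ρ m n (k + 1) (r + 1) + Hterm q α β ρ m n k r))
          + Gpterm q α β ρ m n (k + 1) 0 := by
        rw [L2, Finset.sum_congr rfl fun r hr =>
          L1 q hq α β ρ m n k r (Nat.lt_succ_iff.mp (Finset.mem_range.mp hr))]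
    _ = ((∑ r ∈ Finset.range (n + 1), Gpterm q α β ρ m n (k + 1) (r + 1))
          + Gpterm q α β ρ m n (k + 1) 0)
          + ∑ r ∈ Finset.range (n + 1), Hterm q α β ρ m n k r := by
        rw [Finset.sum_add_distrib]; ring
    _ = (∑ r ∈ Finset.range (n + 1 + 1), Gpterm q α β ρ m n (k + 1) r)
          + ∑ r ∈ Finset.range (n + 1), Hterm q α β ρ m n k r := by
        rw [← Finset.sum_range_succ']
    _ = (∑ r ∈ Finset.range (n + 1), Gpterm q α β ρ m n (k + 1) r)
          + ∑ r ∈ Finset.range (n + 1), Hterm q α β ρ m n k r := by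
        rw [Finset.sum_range_succ, L3, add_zero]
    _ = ∑ r ∈ Finset.range (n + 1),
          (Gpterm q α β ρ m n (k + 1) r + Hterm q α β ρ m n k r) := by
        rw [Finset.sum_add_distrib]
    _ = ∑ r ∈ Finset.range (n + 1),
          (q ^ (β * (k : ℝ) - α * ((n : ℝ) + (m : ℝ)) - ρ) * Gterm q α β ρ m n k r
            + qBracket q (β * ((k : ℝ) + 1) - α * ((n : ℝ) + (m : ℝ)) - ρ) *
                Gterm q α β ρ m n (k + 1) r) := by
        exact Finset.sum_congr rfl fun r hr =>
          L4 q hq α β ρ m n k r (Nat.lt_succ_iff.mp (Finset.mem_range.mp hr))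
    _ = _ := by
        rw [Finset.sum_add_distrib, ← Finset.mul_sum, ← Finset.mul_sum]

lemma base_case (q : ℝ) (α β ρ : ℝ) (m k : ℕ) :
    typeIIStirling q α β ρ m k = ∑ r ∈ Finset.range 1, Gterm q α β ρ m 0 k r := by
  rw [Finset.sum_range_one]
  have hbody : ∀ j ∈ Finset.range (m + 1),
      typeIIStirling q α β ρ m j *
        q ^ ((0 : ℕ) * (β * (j : ℝ) - α * (m : ℝ) - ρ)) *
        qBinom (q ^ (-α)) 0 0 *
        (if j ≤ k then typeIIStirling q α β 0 0 (k - j) else 0) *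
        ∏ i ∈ Finset.range (0 - 0),
          qBracket q (β * (j : ℝ) - ρ - α * ((m : ℝ) + (i : ℝ)))
      = if j = k then typeIIStirling q α β ρ m j else 0 := by
    intro j hj
    rw [qBinom_zero_right]
    have h0 : typeIIStirling q α β 0 0 (k - j) = if k - j = 0 then 1 else 0 :=
      genStirling_zero_right _ _ _ _ _
    rw [h0]
    simp only [Nat.cast_zero, zero_mul, Real.rpow_zero, Nat.sub_self, Finset.range_zero,
      Finset.prod_empty, mul_one, one_mul]
    by_cases h1 : j ≤ k
    · by_cases h2 : j = k
      · subst h2; rw [if_pos h1, if_pos rfl, if_pos (by omega)]; ring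
      · rw [if_pos h1, if_neg (by omega), if_neg h2]; ring
    · rw [if_neg h1, if_neg (by omega)]; ring
  rw [Gterm, Finset.sum_congr rfl hbody, Finset.sum_ite_eq' (Finset.range (m + 1)) k]
  by_cases hk : k ∈ Finset.range (m + 1)
  · rw [if_pos hk]
  · rw [if_neg hk]
    exact typeII_of_lt _ _ _ _ (by simpa using Finset.mem_range.not.mp hk)

lemma zero_k_case (q : ℝ) (α β ρ : ℝ) (m n : ℕ) (hm : 1 ≤ m) :
    typeIIStirling q α β ρ (n + 1 + m) 0
      = ∑ r ∈ Finset.range (n + 1 + 1), Gterm q α β ρ m (n + 1) 0 r := by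
  have hL : n + 1 + m = (n + m) + 1 := by omega
  have hml : typeIIStirling q α β ρ m 0 = 0 := by
    obtain ⟨m', rfl⟩ : ∃ m', m = m' + 1 := ⟨m - 1, by omega⟩
    exact genStirling_zero _ _ _ _ _
  rw [hL]
  have hlhs : typeIIStirling q α β ρ ((n + m) + 1) 0 = 0 := genStirling_zero _ _ _ _ _
  rw [hlhs]
  symm
  refine Finset.sum_eq_zero fun r _ => ?_
  refine Finset.sum_eq_zero fun j _ => ?_
  match j with
  | 0 => rw [hml]; ring
  | j + 1 => rw [if_neg (by omega)]; ring

lemma main_lemma (q : ℝ) (hq : 0 < q) (α β ρ : ℝ) (m : ℕ) (hm : 1 ≤ m) :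
    ∀ n k, typeIIStirling q α β ρ (n + m) k
      = ∑ r ∈ Finset.range (n + 1), Gterm q α β ρ m n k r := by
  intro n
  induction n with
  | zero =>
    intro k
    rw [Nat.zero_add]
    exact base_case q α β ρ m k
  | succ n ih =>
    intro k
    match k with
    | 0 => exact zero_k_case q α β ρ m n hm
    | k + 1 =>
      have hL : n + 1 + m = (n + m) + 1 := by omega
      rw [hL, typeII_succ_succ, ih k, ih (k + 1)]
      push_cast
      exact (step_lemma q hq α β ρ m n k).symm

/-- Spivey-type convolution for Type II generalized `q`-Stirling numbers. -/
theorem spivey_typeII (q : ℝ) (hq : 0 < q) (hq1 : q ≠ 1) (α β ρ : ℝ) (n k m : ℕ)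
    (hm : 1 ≤ m) :
    typeIIStirling q α β ρ (n + m) k
    = ∑ r ∈ Finset.range (n + 1), ∑ j ∈ Finset.range (m + 1),
        typeIIStirling q α β ρ m j *
          q ^ ((r : ℝ) * (β * (j : ℝ) - α * (m : ℝ) - ρ)) *
          qBinom (q ^ (-α)) n r *
          (if j ≤ k then typeIIStirling q α β 0 r (k - j) else 0) *
          ∏ i ∈ Finset.range (n - r),
            qBracket q (β * (j : ℝ) - ρ - α * ((m : ℝ) + (i : ℝ))) := by
  rw [main_lemma q hq α β ρ m hm n k]
  rfl
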